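/- Let a ≤ b be naturals and let M be the family of dyadic intervals D(c, k) that are contained in the integer interval [a, b] and are maximal under set inclusion among all dyadic intervals contained in [a, b]. Then M is finite, its members are pairwise disjoint, their union equals [a, b], and for every D ∈ M, every dyadic interval D' with D ⊊ D' satisfies D' ⊄ [a, b]. -/

import Mathlib

/-- The dyadic interval `D(c, k) = {c·2^k, c·2^k + 1, …, (c+1)·2^k − 1}`. -/
def dyadic (c k : ℕ) : Finset ℕ :=
  Finset.Ico (c * 2 ^ k) ((c + 1) * 2 ^ k)

lemma dyadic_card (c k : ℕ) : (dyadic c k).card = 2 ^ k := by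
  simp [dyadic, Nat.card_Ico, add_mul]

lemma dyadic_laminar {c k c' k' : ℕ} (hk : k ≤ k') {x : ℕ}
    (hx : x ∈ dyadic c k) (hx' : x ∈ dyadic c' k') :
    dyadic c k ⊆ dyadic c' k' := by
  simp only [dyadic, Finset.mem_Ico] at hx hx'
  have hm : 2 ^ (k' - k) * 2 ^ k = 2 ^ k' := pow_sub_mul_pow 2 hk
  set m := 2 ^ (k' - k) with hmdef
  have h1 : c' * m ≤ c := by
    have : c' * m * 2 ^ k < (c + 1) * 2 ^ k := by
      rw [mul_assoc, hm]
      exact lt_of_le_of_lt hx'.1 hx.2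
    have := Nat.lt_of_mul_lt_mul_right this
    omega
  have h2 : c + 1 ≤ (c' + 1) * m := by
    have : c * 2 ^ k < (c' + 1) * m * 2 ^ k := by
      rw [mul_assoc, hm]
      exact lt_of_le_of_lt hx.1 hx'.2
    exact Nat.lt_of_mul_lt_mul_right this
  intro y hy
  simp only [dyadic, Finset.mem_Ico] at hy ⊢
  constructor
  · calc c' * 2 ^ k' = c' * m * 2 ^ k := by rw [mul_assoc, hm]
      _ ≤ c * 2 ^ k := Nat.mul_le_mul_right _ h1
      _ ≤ y := hy.1
  · calc y < (c + 1) * 2 ^ k := hy.2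
      _ ≤ (c' + 1) * m * 2 ^ k := Nat.mul_le_mul_right _ h2
      _ = (c' + 1) * 2 ^ k' := by rw [mul_assoc, hm]

/-- **Canonical dyadic decomposition of an interval.** The family `M` of dyadic
intervals that are contained in `[a, b]` and maximal under inclusion among all dyadic
intervals contained in `[a, b]` is finite, consists of pairwise disjoint sets, covers
exactly `[a, b]`, and no strictly larger dyadic interval over a member of `M` is
contained in `[a, b]`. -/
theorem maximal_dyadic_decomposition (a b : ℕ) (hab : a ≤ b)
    (M : Set (Finset ℕ))
    (hM : M = {D | (∃ c k, D = dyadic c k) ∧ D ⊆ Finset.Icc a b ∧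
      ∀ D' : Finset ℕ, (∃ c k, D' = dyadic c k) → D' ⊆ Finset.Icc a b →
        D ⊆ D' → D = D'}) :
    M.Finite ∧
    M.PairwiseDisjoint id ∧
    (∀ x : ℕ, (∃ D ∈ M, x ∈ D) ↔ x ∈ Finset.Icc a b) ∧
    (∀ D ∈ M, ∀ D' : Finset ℕ, (∃ c k, D' = dyadic c k) → D ⊂ D' →
      ¬ D' ⊆ Finset.Icc a b) := by
  classical
  subst hM
  refine ⟨?_, ?_, ?_, ?_⟩
  · -- finiteness
    apply Set.Finite.subset (Finset.Icc a b).powerset.finite_toSet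
    intro D hD
    exact Finset.mem_coe.mpr (Finset.mem_powerset.mpr hD.2.1)
  · -- pairwise disjoint
    intro D1 h1 D2 h2 hne
    obtain ⟨⟨c1, k1, rfl⟩, hs1, hmax1⟩ := h1
    obtain ⟨⟨c2, k2, rfl⟩, hs2, hmax2⟩ := h2
    simp only [Function.onFun, id]
    rw [Finset.disjoint_left]
    intro x hx1 hx2
    rcases le_total k1 k2 with hk | hk
    · exact hne (hmax1 _ ⟨c2, k2, rfl⟩ hs2 (dyadic_laminar hk hx1 hx2))
    · exact hne (hmax2 _ ⟨c1, k1, rfl⟩ hs1 (dyadic_laminar hk hx2 hx1)).symm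
  · -- union covers [a, b]
    intro x
    constructor
    · rintro ⟨D, ⟨_, hDs, _⟩, hxD⟩
      exact hDs hxD
    · intro hx
      set P : ℕ → Prop := fun k => ∃ c, x ∈ dyadic c k ∧ dyadic c k ⊆ Finset.Icc a b
        with hP
      have hP0 : P 0 := by
        refine ⟨x, ?_, ?_⟩
        · simp [dyadic]
        · intro y hy
          simp only [dyadic, Finset.mem_Ico] at hy
          simp only [Finset.mem_Icc] at hx ⊢
          omega
      have hbound : ∀ k, P k → k ≤ b + 1 := by
        intro k ⟨c, hxc, hc⟩
        have hcard : 2 ^ k ≤ b + 1 - a := by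
          calc 2 ^ k = (dyadic c k).card := (dyadic_card c k).symm
            _ ≤ (Finset.Icc a b).card := Finset.card_le_card hc
            _ = b + 1 - a := Nat.card_Icc a b
        have := Nat.lt_two_pow_self (n := k)
        omega
      set k0 := Nat.findGreatest P (b + 1) with hk0
      have hPk0 : P k0 := Nat.findGreatest_spec (Nat.zero_le _) hP0
      obtain ⟨c0, hxc0, hc0sub⟩ := hPk0
      refine ⟨dyadic c0 k0, ⟨⟨c0, k0, rfl⟩, hc0sub, ?_⟩, hxc0⟩
      rintro D' ⟨c', k', rfl⟩ hD's hsub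
      have hx' : x ∈ dyadic c' k' := hsub hxc0
      have hPk' : P k' := ⟨c', hx', hD's⟩
      have hk' : k' ≤ k0 := by
        by_contra h
        push_neg at h
        exact Nat.findGreatest_is_greatest h (hbound k' hPk') hPk'
      apply Finset.eq_of_subset_of_card_le hsub
      rw [dyadic_card, dyadic_card]
      exact Nat.pow_le_pow_right (by norm_num) hk'
  · -- no strictly larger dyadic interval fits
    rintro D ⟨hDd, hDs, hmax⟩ D' hD'd hssub hD's
    exact hssub.ne (hmax D' hD'd hD's hssub.subset)
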